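/- arXiv:1802.00367 — 8 statements merged into one kernel-verified Lean document; each statement's English description precedes it below -/
import Mathlib

section
/- For all natural numbers r and d, if SimplePair r d and SimplePair (r^2) (d^2) both hold, then d = r^2. In other words, among the (rank, dimension) pairs of finite-dimensional simple Euclidean Jordan algebras, only those of the complex family (d = r^2) have the property that the pair (r^2, d^2) is again realized by a simple Euclidean Jordan algebra. -/
/-- The (rank, dimension) pairs of finite-dimensional simple Euclidean Jordan
algebras, by the Jordan–von Neumann–Wigner classification: complex hermitian,
real symmetric, quaternionic hermitian matrix algebras, the exceptional
octonionic algebra, and the spin factors. -/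
def SimplePair (r d : ℕ) : Prop :=
  (∃ n, 1 ≤ n ∧ r = n ∧ d = n ^ 2) ∨
  (∃ n, 1 ≤ n ∧ r = n ∧ d = n * (n + 1) / 2) ∨
  (∃ n, 1 ≤ n ∧ r = n ∧ d = n * (2 * n - 1)) ∨
  (r = 3 ∧ d = 27) ∨
  (∃ K, 2 ≤ K ∧ r = 2 ∧ d = K)


private lemma half_eq (d n : ℕ) (hd : d = n*(n+1)/2) : 2*d = n*(n+1) := by
  have := Nat.div_mul_cancel (Nat.even_mul_succ_self n).two_dvd
  omega

private lemma quat_eq (d n : ℕ) (h : 1 ≤ n) (hd : d = n*(2*n-1)) : d + n = 2*n*n := by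
  subst hd
  rw [Nat.mul_sub, Nat.mul_one]
  have h1 : n*(2*n) = 2*n*n := by ring
  have h2 : n ≤ 2*n*n := by nlinarith
  omega

private lemma sq_small (r m : ℕ) (h1 : 2 ≤ m) (h2 : m ≤ 3) (h : r^2 = m) : False := by
  rcases Nat.lt_or_ge r 2 with hr | hr
  · interval_cases r <;> omega
  · have h3 : 2*2 ≤ r*r := Nat.mul_le_mul hr hr
    have h4 : r^2 = r*r := sq r
    omega

private lemma not_between_sq (d b a : ℕ) (h1 : b*b < a) (h2 : a < (b+1)*(b+1))
    (hd : d^2 = a) : False := by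
  have hd' : d*d = a := by rw [← hd]; ring
  rcases le_or_gt d b with h | h
  · nlinarith
  · nlinarith

/-- Among simple EJA (rank, dimension) pairs, only the complex family (d = r²)
has the property that (r², d²) is again a simple EJA pair. -/
theorem only_complex_self_composes (r d : ℕ)
    (h : SimplePair r d) (h2 : SimplePair (r ^ 2) (d ^ 2)) : d = r ^ 2 := by
  rcases h with ⟨n, hn, rfl, hd⟩ | ⟨n, hn, rfl, hd⟩ | ⟨n, hn, rfl, hd⟩ |
    ⟨rfl, rfl⟩ | ⟨K, hK, rfl, rfl⟩
  · exact hd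
  · -- real symmetric: 2d = r(r+1)
    have e1 : 2*d = r*(r+1) := half_eq d r hd
    have e1' : 2*(d:ℤ) = r*(r+1) := by exact_mod_cast e1
    rcases h2 with ⟨m, hm, he, hq⟩ | ⟨m, hm, he, hq⟩ | ⟨m, hm, he, hq⟩ |
      ⟨he, _⟩ | ⟨K, hK, he, _⟩
    · subst he
      exact Nat.pow_left_injective (by norm_num) hq
    · subst he
      have key : 2*(d^2) = r^2*(r^2+1) := half_eq _ _ hq
      have key' : 2*(d:ℤ)^2 = (r:ℤ)^2*((r:ℤ)^2+1) := by exact_mod_cast key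
      have hz : ((r:ℤ)*(r-1))^2 = 0 := by
        linear_combination (2*(d:ℤ) + r^2 + r) * e1' - 2*key'
      have hz2 : (r:ℤ)*(r-1) = 0 := sq_eq_zero_iff.mp hz
      have hn1 : r = 1 := by
        rcases mul_eq_zero.mp hz2 with h0 | h0
        · exact absurd (by exact_mod_cast h0) (by omega)
        · have : (r:ℤ) = 1 := by linarith
          exact_mod_cast this
      subst hn1; simp at e1 ⊢; omega
    · subst he
      have key : d^2 + r^2 = 2*(r^2)*(r^2) := quat_eq _ _ (by nlinarith) hq
      have key' : (d:ℤ)^2 + (r:ℤ)^2 = 2*(r:ℤ)^2*(r:ℤ)^2 := by exact_mod_cast key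
      have hz : (r:ℤ)^2*((r:ℤ)-1)*(7*(r:ℤ)+5) = 0 := by
        linear_combination (2*(d:ℤ) + r^2 + r) * e1' - 4*key'
      have hn1 : r = 1 := by
        have hr' : (1:ℤ) ≤ r := by exact_mod_cast hn
        rcases mul_eq_zero.mp hz with h0 | h0
        · rcases mul_eq_zero.mp h0 with h1 | h1
          · have : (r:ℤ) = 0 := pow_eq_zero_iff (by norm_num) |>.mp h1
            omega
          · have : (r:ℤ) = 1 := by linarith
            exact_mod_cast this
        · omega
      subst hn1; simp at e1 ⊢; omega
    · exact absurd he (fun hh => sq_small r 3 (by norm_num) (by norm_num) hh)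
    · exact absurd he (fun hh => sq_small r 2 (by norm_num) (by norm_num) hh)
  · -- quaternionic: d + r = 2r²
    have e1 : d + r = 2*r*r := quat_eq d r hn hd
    have e1' : (d:ℤ) + r = 2*(r:ℤ)*r := by exact_mod_cast e1
    rcases h2 with ⟨m, hm, he, hq⟩ | ⟨m, hm, he, hq⟩ | ⟨m, hm, he, hq⟩ |
      ⟨he, _⟩ | ⟨K, hK, he, _⟩
    · subst he
      exact Nat.pow_left_injective (by norm_num) hq
    · subst he
      have key : 2*(d^2) = r^2*(r^2+1) := half_eq _ _ hq
      have key' : 2*(d:ℤ)^2 = (r:ℤ)^2*((r:ℤ)^2+1) := by exact_mod_cast key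
      have hz : (r:ℤ)^2*(7*(r:ℤ)-1)*((r:ℤ)-1) = 0 := by
        linear_combination key' - 2*((d:ℤ) + 2*r^2 - r)*e1'
      have hn1 : r = 1 := by
        have hr' : (1:ℤ) ≤ r := by exact_mod_cast hn
        rcases mul_eq_zero.mp hz with h0 | h0
        · rcases mul_eq_zero.mp h0 with h1 | h1
          · have : (r:ℤ) = 0 := pow_eq_zero_iff (by norm_num) |>.mp h1
            omega
          · omega
        · have : (r:ℤ) = 1 := by linarith
          exact_mod_cast this
      subst hn1; simp at e1 ⊢; omega
    · subst he
      have key : d^2 + r^2 = 2*(r^2)*(r^2) := quat_eq _ _ (by nlinarith) hq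
      have key' : (d:ℤ)^2 + (r:ℤ)^2 = 2*(r:ℤ)^2*(r:ℤ)^2 := by exact_mod_cast key
      have hz : 2*((r:ℤ)*((r:ℤ)-1))^2 = 0 := by
        linear_combination key' - ((d:ℤ) + 2*r^2 - r)*e1'
      have hz2 : (r:ℤ)*(r-1) = 0 := by
        rcases mul_eq_zero.mp hz with h0 | h0
        · norm_num at h0
        · exact sq_eq_zero_iff.mp h0
      have hn1 : r = 1 := by
        have hr' : (1:ℤ) ≤ r := by exact_mod_cast hn
        rcases mul_eq_zero.mp hz2 with h0 | h0
        · omega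
        · have : (r:ℤ) = 1 := by linarith
          exact_mod_cast this
      subst hn1; simp at e1 ⊢; omega
    · exact absurd he (fun hh => sq_small r 3 (by norm_num) (by norm_num) hh)
    · exact absurd he (fun hh => sq_small r 2 (by norm_num) (by norm_num) hh)
  · -- exceptional: r = 3, d = 27
    exfalso
    rcases h2 with ⟨m, hm, he, hq⟩ | ⟨m, hm, he, hq⟩ | ⟨m, hm, he, hq⟩ |
      ⟨he, _⟩ | ⟨K, hK, he, _⟩
    · norm_num at he; subst he; norm_num at hq
    · norm_num at he; subst he; omega
    · norm_num at he; subst he; omega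
    · norm_num at he
    · norm_num at he
  · -- spin: r = 2
    rcases h2 with ⟨m, hm, he, hq⟩ | ⟨m, hm, he, hq⟩ | ⟨m, hm, he, hq⟩ |
      ⟨he, _⟩ | ⟨K', hK', he, _⟩
    · subst he
      exact Nat.pow_left_injective (by norm_num) hq
    · norm_num at he; subst he
      norm_num at hq
      exact absurd hq (fun hh => not_between_sq d 3 10 (by norm_num) (by norm_num) hh)
    · norm_num at he; subst he
      norm_num at hq
      exact absurd hq (fun hh => not_between_sq d 5 28 (by norm_num) (by norm_num) hh)
    · norm_num at he
    · norm_num at he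
end

section
/- For every natural number K ≥ 2, if SimplePair 4 (K^2) holds then K = 4; that is, among the spin factors (rank 2, dimension K), only K = 4 (which coincides with the complex qubit algebra, i.e. the Bloch ball) admits a self-composite of rank 4 and dimension K^2 realized by a simple Euclidean Jordan algebra. -/
/-- Among the spin factors (rank 2, dimension K), only K = 4 (the Bloch ball,
i.e. the complex qubit) admits a self-composite of rank 4 and dimension K²
realized by a simple EJA. -/
theorem spin_factor_self_composition (K : ℕ) (hK : 2 ≤ K)
    (h : SimplePair 4 (K ^ 2)) : K = 4 := by
  rcases h with ⟨n, _, h4, hd⟩ | ⟨n, _, h4, hd⟩ | ⟨n, _, h4, hd⟩ | ⟨h4, _⟩ | ⟨m, _, h4, _⟩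
  · subst h4
    have : K ^ 2 = 16 := by omega
    nlinarith
  · subst h4
    have hd' : K ^ 2 = 10 := by omega
    have : K ≤ 6 := by nlinarith
    interval_cases K <;> omega
  · subst h4
    have hd' : K ^ 2 = 28 := by omega
    have : K ≤ 6 := by nlinarith
    interval_cases K <;> omega
  · omega
  · omega
end

section
/- Let n, k ≥ 1 and let L be a linear map from n×n complex matrices to (nk)×(nk) complex matrices (indexed by Fin n × Fin k) admitting a Kraus representation L(x) = ∑_{i∈S} K_i x K_iᴴ for a finite family of (nk)×n complex matrices K_i. If the marginal of L on the first tensor factor is the identity, i.e. Tr₂(L x) = x for every x, then there exists a positive semidefinite k×k complex matrix ρ with trace 1 such that L x = x ⊗ₖ ρ for every x. (All leaks on a fully quantum system are trivial.) -/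
open Matrix Kronecker
open scoped ComplexOrder

/-- The partial trace over the second tensor factor. -/
noncomputable def trace2 {n k : ℕ} (M : Matrix (Fin n × Fin k) (Fin n × Fin k) ℂ) :
    Matrix (Fin n) (Fin n) ℂ :=
  fun a b => ∑ j : Fin k, M (a, j) (b, j)

private lemma aux_zero {ι : Type} (S : Finset ι) {k : ℕ} (f : ι → Fin k → ℂ)
    (h : ∑ j : Fin k, ∑ i ∈ S, f i j * (starRingEnd ℂ) (f i j) = 0) :
    ∀ i ∈ S, ∀ j, f i j = 0 := by
  intro i hi j
  have h' : ∑ j : Fin k, ∑ i ∈ S, Complex.normSq (f i j) = 0 := by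
    simp only [Complex.mul_conj] at h
    exact_mod_cast h
  have h2 := (Finset.sum_eq_zero_iff_of_nonneg (fun j _ =>
    Finset.sum_nonneg fun i _ => Complex.normSq_nonneg _)).mp h' j (Finset.mem_univ j)
  have h3 := (Finset.sum_eq_zero_iff_of_nonneg (fun i _ =>
    Complex.normSq_nonneg _)).mp h2 i hi
  exact Complex.normSq_eq_zero.mp h3

/-- All leaks on a fully quantum system are trivial: a completely positive map
`L : M_n(ℂ) → M_n(ℂ) ⊗ M_k(ℂ)` (given by a finite Kraus representation) whose
marginal on the first factor is the identity channel must be of the form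
`x ↦ x ⊗ ρ` for a fixed density matrix `ρ`. -/
theorem quantum_leaks_are_trivial (n k : ℕ) (hn : 1 ≤ n) (hk : 1 ≤ k)
    (L : Matrix (Fin n) (Fin n) ℂ →ₗ[ℂ] Matrix (Fin n × Fin k) (Fin n × Fin k) ℂ)
    (hKraus : ∃ (ι : Type) (S : Finset ι)
        (K : ι → Matrix (Fin n × Fin k) (Fin n) ℂ),
        ∀ x, L x = ∑ i ∈ S, K i * x * (K i)ᴴ)
    (hmarginal : ∀ x, trace2 (L x) = x) :
    ∃ ρ : Matrix (Fin k) (Fin k) ℂ,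
      ρ.PosSemidef ∧ ρ.trace = 1 ∧ ∀ x, L x = x ⊗ₖ ρ := by
  obtain ⟨ι, S, K, hK⟩ := hKraus
  have H1 : ∀ p q a b : Fin n,
      (∑ j : Fin k, ∑ i ∈ S, K i (a,j) p * (starRingEnd ℂ) (K i (b,j) q))
        = if p = a ∧ q = b then (1:ℂ) else 0 := by
    intro p q a b
    have h := congrFun (congrFun (hmarginal (Matrix.single p q 1)) a) b
    rw [hK] at h
    simp only [trace2, Matrix.sum_apply, Matrix.mul_apply, Matrix.conjTranspose_apply,
      Matrix.single, Matrix.of_apply, mul_ite, ite_mul, mul_one, one_mul,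
      mul_zero, zero_mul, ite_and, Finset.sum_ite_eq, Finset.sum_ite_eq',
      Finset.mem_univ, if_true] at h
    simp only [ite_and]
    exact h
  set e0 : Fin n := ⟨0, hn⟩ with he0
  set c : ι → Fin k → ℂ := fun i j => K i (e0, j) e0 with hc
  have hoff : ∀ i ∈ S, ∀ j, ∀ a b : Fin n, b ≠ a → K i (a, j) b = 0 := by
    intro i hi j a b hab
    refine aux_zero S (fun i j => K i (a, j) b) ?_ i hi j
    have := H1 b b a a
    simpa [hab] using this
  have hdiag : ∀ i ∈ S, ∀ j, ∀ a : Fin n, K i (a, j) a = c i j := by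
    intro i hi j a
    have hz := aux_zero S (fun i j => K i (a, j) a - c i j) ?_ i hi j
    · exact sub_eq_zero.mp hz
    · have expand : ∀ u v : ℂ, (u - v) * (starRingEnd ℂ) (u - v)
          = u * (starRingEnd ℂ) u - u * (starRingEnd ℂ) v
            - (v * (starRingEnd ℂ) u - v * (starRingEnd ℂ) v) := by
        intro u v; rw [map_sub]; ring
      have e1 := H1 a a a a
      have e2 := H1 a e0 a e0
      have e3 := H1 e0 a e0 a
      have e4 := H1 e0 e0 e0 e0
      simp only [and_self, if_true, eq_self_iff_true] at e1 e2 e3 e4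
      simp only [expand, Finset.sum_sub_distrib]
      rw [e1, e2, e3, e4]
      ring
  have hform : ∀ i ∈ S, ∀ j, ∀ a b : Fin n,
      K i (a, j) b = if a = b then c i j else 0 := by
    intro i hi j a b
    by_cases hab : a = b
    · subst hab; simp [hdiag i hi j a]
    · simp [hab, hoff i hi j a b (Ne.symm hab)]
  set ρ : Matrix (Fin k) (Fin k) ℂ :=
    Matrix.of fun j j' => ∑ i ∈ S, c i j * (starRingEnd ℂ) (c i j') with hρ
  have hPSD : ρ.PosSemidef := by
    have hfac : ρ = (Matrix.of fun (i : S) (j : Fin k) => (starRingEnd ℂ) (c i.1 j))ᴴ *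
        (Matrix.of fun (i : S) (j : Fin k) => (starRingEnd ℂ) (c i.1 j)) := by
      ext j j'
      simp only [hρ, Matrix.of_apply, Matrix.mul_apply, Matrix.conjTranspose_apply]
      rw [← Finset.sum_coe_sort S (fun i => c i j * (starRingEnd ℂ) (c i j'))]
      refine Finset.sum_congr rfl fun i _ => ?_
      simp
    rw [hfac]
    exact Matrix.posSemidef_conjTranspose_mul_self _
  refine ⟨ρ, hPSD, ?_, ?_⟩
  · have e4 := H1 e0 e0 e0 e0
    simp only [and_self, if_true, eq_self_iff_true] at e4
    simpa [Matrix.trace, Matrix.diag, hρ] using e4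
  · intro x
    ext ⟨a, j⟩ ⟨b, j'⟩
    rw [hK x, Matrix.sum_apply]
    have step1 : ∀ i ∈ S, (K i * x * (K i)ᴴ) (a, j) (b, j')
        = c i j * x a b * (starRingEnd ℂ) (c i j') := by
      intro i hi
      simp only [Matrix.mul_apply, Matrix.conjTranspose_apply, hform i hi,
        ite_mul, mul_ite, zero_mul, mul_zero, apply_ite (star : ℂ → ℂ), star_zero,
        Finset.sum_ite_eq, Finset.mem_univ, if_true, starRingEnd_apply]
    rw [Finset.sum_congr rfl step1]
    simp only [Matrix.kroneckerMap_apply, hρ, Matrix.of_apply, Finset.mul_sum]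
    refine Finset.sum_congr rfl fun i _ => ?_
    ring
end

section
/- Essential uniqueness of purification: if M and N are n×m complex matrices with M Mᴴ = N Nᴴ, then there exists an m×m unitary matrix U with N = M U. -/
open Matrix

lemma toEuclideanLin_mul {n m p : ℕ} (A : Matrix (Fin n) (Fin m) ℂ)
    (B : Matrix (Fin m) (Fin p) ℂ) :
    Matrix.toEuclideanLin (A * B) =
      (Matrix.toEuclideanLin A).comp (Matrix.toEuclideanLin B) := by
  ext v i
  simp [Matrix.toEuclideanLin_apply, Matrix.mulVec_mulVec]

/-- Essential uniqueness of purification: two matrices with the same "reduced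
state" `M Mᴴ = N Nᴴ` are related by a unitary on the purifying system. -/
theorem essential_uniqueness_of_purification (n m : ℕ)
    (M N : Matrix (Fin n) (Fin m) ℂ) (h : M * Mᴴ = N * Nᴴ) :
    ∃ U : Matrix (Fin m) (Fin m) ℂ,
      U ∈ Matrix.unitaryGroup (Fin m) ℂ ∧ N = M * U := by
  classical
  set f : EuclideanSpace ℂ (Fin n) →ₗ[ℂ] EuclideanSpace ℂ (Fin m) :=
    Matrix.toEuclideanLin Mᴴ with hf
  set g : EuclideanSpace ℂ (Fin n) →ₗ[ℂ] EuclideanSpace ℂ (Fin m) :=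
    Matrix.toEuclideanLin Nᴴ with hg
  -- inner products agree
  have hinner : ∀ x y, inner ℂ (f x) (f y) = inner ℂ (g x) (g y) := by
    intro x y
    have h1 : inner ℂ (f x) (f y) = inner ℂ x (Matrix.toEuclideanLin (M * Mᴴ) y) := by
      rw [toEuclideanLin_mul, hf]
      rw [show Matrix.toEuclideanLin M = LinearMap.adjoint (Matrix.toEuclideanLin Mᴴ) by
        rw [← Matrix.toEuclideanLin_conjTranspose_eq_adjoint, Matrix.conjTranspose_conjTranspose]]
      simp [LinearMap.adjoint_inner_right]
    have h2 : inner ℂ (g x) (g y) = inner ℂ x (Matrix.toEuclideanLin (N * Nᴴ) y) := by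
      rw [toEuclideanLin_mul, hg]
      rw [show Matrix.toEuclideanLin N = LinearMap.adjoint (Matrix.toEuclideanLin Nᴴ) by
        rw [← Matrix.toEuclideanLin_conjTranspose_eq_adjoint, Matrix.conjTranspose_conjTranspose]]
      simp [LinearMap.adjoint_inner_right]
    rw [h1, h2, h]
  have hnorm : ∀ x, ‖f x‖ = ‖g x‖ := by
    intro x
    have := hinner x x
    rw [inner_self_eq_norm_sq_to_K, inner_self_eq_norm_sq_to_K] at this
    have h2 : (‖f x‖ : ℝ) ^ 2 = (‖g x‖ : ℝ) ^ 2 := by exact_mod_cast this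
    nlinarith [norm_nonneg (f x), norm_nonneg (g x)]
  have hker : LinearMap.ker f ≤ LinearMap.ker g := by
    intro x hx
    rw [LinearMap.mem_ker] at hx ⊢
    have := hnorm x
    rw [hx, norm_zero] at this
    exact norm_eq_zero.mp this.symm
  -- the isometry on the range of f
  let φ : LinearMap.range f →ₗ[ℂ] EuclideanSpace ℂ (Fin m) :=
    ((LinearMap.ker f).liftQ g hker).comp f.quotKerEquivRange.symm.toLinearMap
  have hφ : ∀ x : EuclideanSpace ℂ (Fin n), ∀ hx : f x ∈ LinearMap.range f,
      φ ⟨f x, hx⟩ = g x := by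
    intro x hx
    simp only [φ, LinearMap.comp_apply, LinearEquiv.coe_toLinearMap,
      LinearMap.quotKerEquivRange_symm_apply_image]
    rfl
  have hφnorm : ∀ s : LinearMap.range f, ‖φ s‖ = ‖s‖ := by
    rintro ⟨-, x, rfl⟩
    rw [hφ x ⟨x, rfl⟩]
    exact (hnorm x).symm
  let L : LinearMap.range f →ₗᵢ[ℂ] EuclideanSpace ℂ (Fin m) := ⟨φ, hφnorm⟩
  let V : EuclideanSpace ℂ (Fin m) →ₗᵢ[ℂ] EuclideanSpace ℂ (Fin m) := L.extend
  have hV : ∀ x, V (f x) = g x := by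
    intro x
    exact (L.extend_apply ⟨f x, ⟨x, rfl⟩⟩).trans (hφ x ⟨x, rfl⟩)
  set W : Matrix (Fin m) (Fin m) ℂ := Matrix.toEuclideanLin.symm V.toLinearMap with hW
  have hWlin : Matrix.toEuclideanLin W = V.toLinearMap := Matrix.toEuclideanLin.apply_symm_apply _
  -- W * Mᴴ = Nᴴ
  have hWM : W * Mᴴ = Nᴴ := by
    apply Matrix.toEuclideanLin.injective
    rw [toEuclideanLin_mul, hWlin]
    refine LinearMap.ext fun x => ?_
    simp only [LinearMap.comp_apply, LinearIsometry.coe_toLinearMap]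
    exact hV x
  -- W is unitary
  have hWu : Wᴴ * W = 1 := by
    apply Matrix.toEuclideanLin.injective
    rw [toEuclideanLin_mul, Matrix.toEuclideanLin_conjTranspose_eq_adjoint, hWlin]
    refine LinearMap.ext fun x => ?_
    apply ext_inner_right ℂ
    intro y
    rw [LinearMap.comp_apply, LinearMap.adjoint_inner_left]
    simp only [LinearIsometry.coe_toLinearMap]
    rw [V.inner_map_map]
    simp [Matrix.toEuclideanLin_apply, Matrix.one_mulVec]
  refine ⟨Wᴴ, ?_, ?_⟩
  · constructor
    · rw [Matrix.star_eq_conjTranspose, Matrix.conjTranspose_conjTranspose,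
        mul_eq_one_comm.mp hWu]
    · rw [Matrix.star_eq_conjTranspose, Matrix.conjTranspose_conjTranspose]
      exact mul_eq_one_comm.mp (mul_eq_one_comm.mp hWu)
  · have := congrArg Matrix.conjTranspose hWM
    rw [Matrix.conjTranspose_mul, Matrix.conjTranspose_conjTranspose,
      Matrix.conjTranspose_conjTranspose] at this
    exact this.symm
end

section
/- Every positive semidefinite n×n complex matrix ρ admits a purification: there exists a vector v : Fin n × Fin n → ℂ such that ρ_{ab} = ∑_{j} v_{(a,j)} · conj(v_{(b,j)}) for all a, b (i.e. ρ is the partial trace over the second factor of the rank-one matrix v vᴴ). Moreover, this purification is essentially unique: if v and w are two such purifications of the same ρ, then there exists an n×n unitary matrix U with w = (I_n ⊗ₖ U) v, where I_n ⊗ₖ U acts on Fin n × Fin n indexed vectors by (I_n ⊗ₖ U) v := fun (a,j) => ∑_{j'} U_{j j'} v_{(a,j')}. -/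
open Matrix
open scoped ComplexOrder

noncomputable section
namespace PurAux

variable {n : ℕ}

lemma tripleswap (f : Fin n → Fin n → Fin n → ℂ) :
    ∑ a, ∑ c, ∑ b, f a c b = ∑ b, ∑ c, ∑ a, f a c b :=
  calc ∑ a, ∑ c, ∑ b, f a c b
      = ∑ a, ∑ b, ∑ c, f a c b :=
        Finset.sum_congr rfl fun _ _ => Finset.sum_comm
    _ = ∑ b, ∑ a, ∑ c, f a c b := Finset.sum_comm
    _ = ∑ b, ∑ c, ∑ a, f a c b :=
        Finset.sum_congr rfl fun _ _ => Finset.sum_comm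

lemma inner_mv (V : Matrix (Fin n) (Fin n) ℂ) (x y : EuclideanSpace ℂ (Fin n)) :
    (inner ℂ (Matrix.toEuclideanLin Vᴴ x) (Matrix.toEuclideanLin Vᴴ y))
      = ∑ b, ∑ c, (starRingEnd ℂ) (x b) * y c * ∑ a, V b a * (starRingEnd ℂ) (V c a) := by
  simp only [PiLp.inner_apply, RCLike.inner_apply', Matrix.toEuclideanLin_apply,
    PiLp.toLp_apply,
    Matrix.mulVec, dotProduct, Matrix.conjTranspose_apply, map_sum,
    _root_.map_mul, starRingEnd_self_apply, star_star,
    Finset.sum_mul, Finset.mul_sum]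
  refine (tripleswap _).trans ?_
  refine Finset.sum_congr rfl fun b _ => Finset.sum_congr rfl fun c _ =>
    Finset.sum_congr rfl fun a _ => ?_
  simp only [starRingEnd_apply, star_star]
  ring

lemma exists_unitary (V W : Matrix (Fin n) (Fin n) ℂ)
    (h : ∀ b c, (∑ a, V b a * (starRingEnd ℂ) (V c a)) = ∑ a, W b a * (starRingEnd ℂ) (W c a)) :
    ∃ M ∈ Matrix.unitaryGroup (Fin n) ℂ, Wᴴ = M * Vᴴ := by
  set A : EuclideanSpace ℂ (Fin n) →ₗ[ℂ] EuclideanSpace ℂ (Fin n) := Matrix.toEuclideanLin Vᴴ with hA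
  set B : EuclideanSpace ℂ (Fin n) →ₗ[ℂ] EuclideanSpace ℂ (Fin n) := Matrix.toEuclideanLin Wᴴ with hB
  have hinner : ∀ x y : EuclideanSpace ℂ (Fin n), inner ℂ (A x) (A y) = inner ℂ (B x) (B y) := by
    intro x y
    rw [hA, hB, inner_mv, inner_mv]
    exact Finset.sum_congr rfl fun b _ => Finset.sum_congr rfl fun c _ => by rw [h]
  have hnorm : ∀ x : EuclideanSpace ℂ (Fin n), ‖A x‖ = ‖B x‖ := by
    intro x
    have h1 : ‖A x‖ ^ 2 = ‖B x‖ ^ 2 := by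
      rw [← inner_self_eq_norm_sq (𝕜 := ℂ), ← inner_self_eq_norm_sq (𝕜 := ℂ), hinner]
    exact (sq_eq_sq₀ (norm_nonneg _) (norm_nonneg _)).mp h1
  have hker : LinearMap.ker A ≤ LinearMap.ker B := by
    intro x hx
    rw [LinearMap.mem_ker] at hx ⊢
    have h0 : ‖B x‖ = 0 := by rw [← hnorm, hx, norm_zero]
    exact norm_eq_zero.mp h0
  let g : LinearMap.range A →ₗ[ℂ] EuclideanSpace ℂ (Fin n) :=
    ((LinearMap.ker A).liftQ B hker).comp A.quotKerEquivRange.symm.toLinearMap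
  have hg : ∀ x, g ⟨A x, LinearMap.mem_range_self A x⟩ = B x := by
    intro x
    have h1 : A.quotKerEquivRange.symm ⟨A x, LinearMap.mem_range_self A x⟩
        = Submodule.Quotient.mk x := by
      rw [LinearEquiv.symm_apply_eq]
      exact Subtype.ext (A.quotKerEquivRange_apply_mk x).symm
    simp only [g, LinearMap.comp_apply, LinearEquiv.coe_toLinearMap, h1,
      Submodule.liftQ_apply]
  have hgnorm : ∀ z : LinearMap.range A, ‖g z‖ = ‖(z : EuclideanSpace ℂ (Fin n))‖ := by
    rintro ⟨z, hz⟩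
    obtain ⟨x, rfl⟩ := hz
    rw [hg, ← hnorm]
  let L : LinearMap.range A →ₗᵢ[ℂ] EuclideanSpace ℂ (Fin n) := ⟨g, hgnorm⟩
  let T := L.extend
  have hT : ∀ x, T (A x) = B x := by
    intro x
    have h2 := L.extend_apply ⟨A x, LinearMap.mem_range_self A x⟩
    simpa [L] using h2.trans (hg x)
  let M : Matrix (Fin n) (Fin n) ℂ := Matrix.of fun i j => T (EuclideanSpace.single j 1) i
  have hTM : T.toLinearMap = Matrix.toEuclideanLin M := by
    apply Module.Basis.ext (EuclideanSpace.basisFun (Fin n) ℂ).toBasis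
    intro j
    ext i
    simp only [OrthonormalBasis.coe_toBasis, EuclideanSpace.basisFun_apply,
      LinearIsometry.coe_toLinearMap, Matrix.toEuclideanLin_apply,
      PiLp.toLp_apply]
    rw [show (WithLp.ofLp (EuclideanSpace.single j (1:ℂ))) = Pi.single j 1 from rfl]
    rw [Matrix.mulVec_single]
    simp [M]
  have hM : M ∈ Matrix.unitaryGroup (Fin n) ℂ := by
    rw [Matrix.mem_unitaryGroup_iff']
    ext i j
    have h1 : inner ℂ (T (EuclideanSpace.single i 1)) (T (EuclideanSpace.single j 1))
        = inner ℂ (EuclideanSpace.single i (1:ℂ)) (EuclideanSpace.single j (1:ℂ)) :=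
      T.inner_map_map _ _
    rw [EuclideanSpace.inner_single_left] at h1
    simp only [PiLp.inner_apply, RCLike.inner_apply', _root_.map_one, one_mul,
      starRingEnd_apply] at h1
    simp only [Matrix.mul_apply, Matrix.one_apply, Matrix.star_apply, M, Matrix.of_apply]
    rw [h1]
    simp [EuclideanSpace.single_apply, eq_comm]
  refine ⟨M, hM, ?_⟩
  apply Matrix.toEuclideanLin.injective
  apply LinearMap.ext
  intro x
  rw [← hB, ← hT x, hA]
  have h3 : (Matrix.toEuclideanLin (M * Vᴴ)) x
      = Matrix.toEuclideanLin M (Matrix.toEuclideanLin Vᴴ x) := by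
    simp [Matrix.toEuclideanLin_apply, Matrix.mulVec_mulVec]
  rw [h3, ← hTM]
  rfl


end PurAux
end

/-- Every positive semidefinite complex matrix admits a purification, i.e. it is
the partial trace over the second factor of a rank-one matrix `v vᴴ`, and this
purification is essentially unique: any two purifications of the same matrix are
related by a unitary `I_n ⊗ₖ U` acting on the purifying (second) factor. -/
theorem purification_exists_and_essentially_unique (n : ℕ)
    (ρ : Matrix (Fin n) (Fin n) ℂ) (hρ : ρ.PosSemidef) :
    (∃ v : Fin n × Fin n → ℂ,
      ∀ a b, ρ a b = ∑ j : Fin n, v (a, j) * (starRingEnd ℂ) (v (b, j))) ∧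
    (∀ v w : Fin n × Fin n → ℂ,
      (∀ a b, ρ a b = ∑ j : Fin n, v (a, j) * (starRingEnd ℂ) (v (b, j))) →
      (∀ a b, ρ a b = ∑ j : Fin n, w (a, j) * (starRingEnd ℂ) (w (b, j))) →
      ∃ U : Matrix (Fin n) (Fin n) ℂ, U ∈ Matrix.unitaryGroup (Fin n) ℂ ∧
        w = fun p => ∑ j' : Fin n, U p.2 j' * v (p.1, j')) := by
  constructor
  · obtain ⟨S, hs, hherm⟩ : ∃ S : Matrix (Fin n) (Fin n) ℂ, S * S = ρ ∧ Sᴴ = S := by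
      open scoped MatrixOrder in
      exact ⟨CFC.sqrt ρ, CFC.sqrt_mul_sqrt_self ρ hρ.nonneg,
        (CFC.sqrt_nonneg ρ).posSemidef.isHermitian⟩
    refine ⟨fun p => S p.1 p.2, fun a b => ?_⟩
    calc ρ a b = (S * S) a b := by rw [hs]
      _ = ∑ j, S a j * S j b := Matrix.mul_apply
      _ = ∑ j, S a j * (starRingEnd ℂ) (S b j) := by
          refine Finset.sum_congr rfl fun j _ => ?_
          congr 1
          rw [starRingEnd_apply, ← Matrix.conjTranspose_apply, hherm]
  · intro v w hv hw
    set V : Matrix (Fin n) (Fin n) ℂ := Matrix.of fun a j => v (a, j) with hVdef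
    set W : Matrix (Fin n) (Fin n) ℂ := Matrix.of fun a j => w (a, j) with hWdef
    obtain ⟨M, hM, hMeq⟩ := PurAux.exists_unitary V W (fun b c => (hv b c).symm.trans (hw b c))
    have h1 : Mᴴ * M = 1 := by
      rw [← Matrix.star_eq_conjTranspose]
      exact Matrix.mem_unitaryGroup_iff'.mp hM
    refine ⟨(Mᴴ)ᵀ, ?_, ?_⟩
    · rw [Matrix.mem_unitaryGroup_iff', Matrix.star_eq_conjTranspose]
      ext i j
      have h4 := congrArg (fun N => (starRingEnd ℂ) (N i j)) h1
      simp only [Matrix.mul_apply, Matrix.conjTranspose_apply, Matrix.transpose_apply,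
        map_sum, _root_.map_mul, starRingEnd_apply, star_star, Matrix.one_apply,
        apply_ite, star_one, star_zero] at h4 ⊢
      exact h4
    · funext p
      obtain ⟨a, j⟩ := p
      have h2 : Wᴴ j a = (M * Vᴴ) j a := by rw [hMeq]
      rw [Matrix.mul_apply] at h2
      have h3 : w (a, j) = (starRingEnd ℂ) (Wᴴ j a) := by
        simp only [Matrix.conjTranspose_apply, starRingEnd_apply, star_star]
        rfl
      rw [h3, h2]
      simp only [map_sum, _root_.map_mul, Matrix.conjTranspose_apply,
        Matrix.transpose_apply, starRingEnd_apply, star_star]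
      rfl
end

section
/- In a symmetric monoidal category with a discarding structure, isomorphisms preserve purity of processes: if f : A ⟶ B is a pure morphism and T : B ⟶ C is an isomorphism, then f ≫ T : A ⟶ C is pure. -/
open CategoryTheory MonoidalCategory

/-- A discarding structure on a monoidal category: a discard morphism for every
object, compatible with tensor and trivial on the unit. -/
structure Discard (C : Type*) [Category C] [MonoidalCategory C] where
  d : ∀ X : C, X ⟶ 𝟙_ C
  d_tensor : ∀ X Y : C, d (X ⊗ Y) = (d X ⊗ₘ d Y) ≫ (λ_ (𝟙_ C)).hom
  d_unit : d (𝟙_ C) = 𝟙 (𝟙_ C)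

variable {C : Type*} [Category C] [MonoidalCategory C]

/-- A leak on `A`: discarding the leaked system gives back the identity. -/
def IsLeak (D : Discard C) {A B : C} (l : A ⟶ A ⊗ B) : Prop :=
  l ≫ (𝟙 A ⊗ₘ D.d B) ≫ (ρ_ A).hom = 𝟙 A

/-- A dilation of a morphism `f : A ⟶ B`: discarding the extra output gives
back `f`. -/
def IsDilation (D : Discard C) {A B E : C} (f : A ⟶ B) (Dm : A ⟶ B ⊗ E) : Prop :=
  Dm ≫ (𝟙 B ⊗ₘ D.d E) ≫ (ρ_ B).hom = f

/-- A morphism is pure if every dilation of it arises from a leak, and leaking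
before equals leaking after. -/
def IsPure (D : Discard C) {A B : C} (f : A ⟶ B) : Prop :=
  ∀ (E : C) (Dm : A ⟶ B ⊗ E), IsDilation D f Dm →
    ∃ (l : B ⟶ B ⊗ E) (j : A ⟶ A ⊗ E),
      IsLeak D l ∧ IsLeak D j ∧ Dm = f ≫ l ∧ Dm = j ≫ (f ⊗ₘ 𝟙 E)

lemma key_nat (D : Discard C) {P Q E : C} (g : P ⟶ Q) :
    (g ⊗ₘ 𝟙 E) ≫ (𝟙 Q ⊗ₘ D.d E) ≫ (ρ_ Q).hom = ((𝟙 P ⊗ₘ D.d E) ≫ (ρ_ P).hom) ≫ g := by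
  rw [tensorHom_comp_tensorHom_assoc, Category.comp_id, Category.id_comp]
  rw [show g ⊗ₘ D.d E = (𝟙 P ⊗ₘ D.d E) ≫ (g ⊗ₘ 𝟙 (𝟙_ C)) by rw [tensorHom_comp_tensorHom]; simp]
  simp

/-- In a symmetric monoidal category with a discarding structure, isomorphisms
preserve purity: if `f` is pure and `T` is an isomorphism, then `f ≫ T` is pure. -/
theorem pure_comp_iso [SymmetricCategory C] (D : Discard C) {A B X : C}
    (f : A ⟶ B) (hf : IsPure D f) (T : B ⟶ X) (hT : IsIso T) :
    IsPure D (f ≫ T) := by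
  intro E Dm hDm
  have hDm' : IsDilation D f (Dm ≫ (inv T ⊗ₘ 𝟙 E)) := by
    unfold IsDilation at hDm ⊢
    rw [Category.assoc, key_nat D (inv T)]
    simp only [Category.assoc]
    rw [reassoc_of% hDm]
    simp
  obtain ⟨l, j, hl, hj, h1, h2⟩ := hf E _ hDm'
  refine ⟨inv T ≫ l ≫ (T ⊗ₘ 𝟙 E), j, ?_, hj, ?_, ?_⟩
  · unfold IsLeak at hl ⊢
    rw [Category.assoc, Category.assoc, key_nat D T]
    simp only [Category.assoc]
    rw [reassoc_of% hl]
    simp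
  · calc Dm = (Dm ≫ (inv T ⊗ₘ 𝟙 E)) ≫ (T ⊗ₘ 𝟙 E) := by simp [tensorHom_comp_tensorHom]
      _ = (f ≫ l) ≫ (T ⊗ₘ 𝟙 E) := by rw [h1]
      _ = (f ≫ T) ≫ inv T ≫ l ≫ (T ⊗ₘ 𝟙 E) := by simp
  · calc Dm = (Dm ≫ (inv T ⊗ₘ 𝟙 E)) ≫ (T ⊗ₘ 𝟙 E) := by simp [tensorHom_comp_tensorHom]
      _ = (j ≫ (f ⊗ₘ 𝟙 E)) ≫ (T ⊗ₘ 𝟙 E) := by rw [h2]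
      _ = j ≫ (f ≫ T ⊗ₘ 𝟙 E) := by simp [tensorHom_comp_tensorHom]
end

section
/- In a monoidal category, let A be an object equipped with a cup η : I ⟶ A ⊗ A and a cap ε : A ⊗ A ⟶ I satisfying the snake identities. If the cup separates, i.e. η = λ_I.inv ≫ (s ⊗ t) for some states s, t : I ⟶ A, then the identity on A factors through the tensor unit: there exist morphisms p : A ⟶ I and q : I ⟶ A with 𝟙_A = p ≫ q. (Hence any non-trivial theory with cups and caps must have correlations.) -/
open CategoryTheory MonoidalCategory

/-- In a monoidal category with cups and caps on `A` satisfying the snake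
identities, if the cup separates into a product of two states then the identity
on `A` factors through the tensor unit (the theory is trivial on `A`). -/
theorem separable_cup_trivialises
    {C : Type*} [Category C] [MonoidalCategory C] (A : C)
    (η : 𝟙_ C ⟶ A ⊗ A) (ε : A ⊗ A ⟶ 𝟙_ C)
    (snake₁ : (λ_ A).inv ≫ (η ⊗ₘ 𝟙 A) ≫ (α_ A A A).hom ≫ (𝟙 A ⊗ₘ ε) ≫ (ρ_ A).hom = 𝟙 A)
    (snake₂ : (ρ_ A).inv ≫ (𝟙 A ⊗ₘ η) ≫ (α_ A A A).inv ≫ (ε ⊗ₘ 𝟙 A) ≫ (λ_ A).hom = 𝟙 A)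
    (s t : 𝟙_ C ⟶ A) (hsep : η = (λ_ (𝟙_ C)).inv ≫ (s ⊗ₘ t)) :
    ∃ (p : A ⟶ 𝟙_ C) (q : 𝟙_ C ⟶ A), 𝟙 A = p ≫ q := by
  refine ⟨(λ_ A).inv ≫ (t ⊗ₘ 𝟙 A) ≫ ε, s, ?_⟩
  conv_lhs => rw [← snake₁, hsep]
  simp [MonoidalCategory.tensorHom_def, whisker_exchange]
  rw [← MonoidalCategory.whiskerLeft_comp_assoc, ← MonoidalCategory.whiskerLeft_comp_assoc,
    ← whisker_exchange_assoc]
  simp [unitors_inv_equal]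
end

section
/- In a monoidal category with a discarding structure, let A be an object equipped with a cup η : I ⟶ A ⊗ A and a cap ε : A ⊗ A ⟶ I satisfying the snake identities. If the cap is causal, i.e. ε = (⨡_A ⊗ ⨡_A) ≫ λ_I.hom, then the identity on A factors as 𝟙_A = ⨡_A ≫ q for some state q : I ⟶ A. (Hence non-trivial causal subtheories cannot contain caps.) -/
open CategoryTheory MonoidalCategory

/-- In a monoidal category with a discarding structure and cups and caps on `A`
satisfying the snake identities, if the cap is causal then the identity on `A`
factors through discarding; hence non-trivial causal subtheories cannot contain
caps. -/
theorem causal_cap_trivialises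
    {C : Type*} [Category C] [MonoidalCategory C] (D : Discard C) (A : C)
    (η : 𝟙_ C ⟶ A ⊗ A) (ε : A ⊗ A ⟶ 𝟙_ C)
    (snake₁ : (λ_ A).inv ≫ (η ⊗ₘ 𝟙 A) ≫ (α_ A A A).hom ≫ (𝟙 A ⊗ₘ ε) ≫ (ρ_ A).hom = 𝟙 A)
    (snake₂ : (ρ_ A).inv ≫ (𝟙 A ⊗ₘ η) ≫ (α_ A A A).inv ≫ (ε ⊗ₘ 𝟙 A) ≫ (λ_ A).hom = 𝟙 A)
    (hcausal : ε = (D.d A ⊗ₘ D.d A) ≫ (λ_ (𝟙_ C)).hom) :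
    ∃ q : 𝟙_ C ⟶ A, 𝟙 A = D.d A ≫ q := by
  refine ⟨η ≫ (D.d A ⊗ₘ 𝟙 A) ≫ (λ_ A).hom, ?_⟩
  have key : (ρ_ A).inv ≫ (𝟙 A ⊗ₘ η) ≫ (α_ A A A).inv ≫
      ((((D.d A ⊗ₘ D.d A) ≫ (λ_ (𝟙_ C)).hom) ⊗ₘ 𝟙 A)) ≫ (λ_ A).hom
      = D.d A ≫ η ≫ (D.d A ⊗ₘ 𝟙 A) ≫ (λ_ A).hom := by
    simp only [tensorHom_id, id_tensorHom, comp_whiskerRight, MonoidalCategory.tensorHom_def, Category.assoc]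
    simp only [MonoidalCategory.whiskerLeft_id, MonoidalCategory.id_whiskerRight,
      Category.id_comp, Category.comp_id]
    rw [← associator_inv_naturality_left_assoc, whisker_exchange_assoc,
      ← rightUnitor_inv_naturality_assoc]
    rw [← unitors_inv_equal]
    simp
  rw [← key, ← hcausal, snake₂]
end
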